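/- Let N ∈ {3,4} and let U_n be the truncated Aubin–Talenti bubbles. If N = 3, there exists C > 0 such that ∫_{ℝ³} U_n(x)² dx ≤ C/n for all integers n ≥ 1. If N = 4, there exists C > 0 such that ∫_{ℝ⁴} U_n(x)² dx ≤ C · ln(1+n²)/n² for all integers n ≥ 1. -/

import Mathlib

open Real MeasureTheory

/-- The radial profile of the truncated Aubin–Talenti bubble. -/
noncomputable def bubbleProfile (N n : ℕ) (r : ℝ) : ℝ :=
  if r < 1 then
    ((N : ℝ) * ((N : ℝ) - 2)) ^ (((N : ℝ) - 2) / 4)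
      * ((n : ℝ) / (1 + (n : ℝ) ^ 2 * r ^ 2)) ^ (((N : ℝ) - 2) / 2)
  else if r < 2 then
    ((N : ℝ) * ((N : ℝ) - 2)) ^ (((N : ℝ) - 2) / 4)
      * ((n : ℝ) / (1 + (n : ℝ) ^ 2)) ^ (((N : ℝ) - 2) / 2) * (2 - r)
  else 0

/-- The truncated Aubin–Talenti bubble `U_n` on `ℝ^N`. -/
noncomputable def Ubub (N n : ℕ) (x : EuclideanSpace ℝ (Fin N)) : ℝ :=
  bubbleProfile N n ‖x‖

open Set

namespace StmtSeven

lemma denom_pos (n : ℕ) (y : ℝ) : (0:ℝ) < 1 + (n:ℝ)^2 * y^2 := by positivity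

lemma bubbleProfile_eq_zero (N n : ℕ) (y : ℝ) (hy : 2 ≤ y) : bubbleProfile N n y = 0 := by
  unfold bubbleProfile
  rw [if_neg (by linarith), if_neg (by linarith)]

lemma measurable_bubbleProfile (N n : ℕ) (hN : 2 ≤ N) : Measurable (bubbleProfile N n) := by
  have he : (0:ℝ) ≤ ((N:ℝ) - 2) / 2 := by
    have : (2:ℝ) ≤ (N:ℝ) := by exact_mod_cast hN
    linarith
  unfold bubbleProfile
  apply Measurable.ite measurableSet_Iio
  · apply Continuous.measurable
    apply Continuous.mul continuous_const
    apply Continuous.rpow_const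
    · exact continuous_const.div (by continuity) (fun y => (denom_pos n y).ne')
    · exact fun x => Or.inr he
  · apply Measurable.ite measurableSet_Iio
    · exact (measurable_const.sub measurable_id).const_mul _
    · exact measurable_const

lemma integral_Ioi_eq_Ioc (g : ℝ → ℝ) (hg : IntegrableOn g (Ioc 0 2))
    (h0 : ∀ y ∈ Ioi (2:ℝ), g y = 0) :
    ∫ y in Ioi (0:ℝ), g y = ∫ y in Ioc (0:ℝ) 2, g y := by
  rw [← Ioc_union_Ioi_eq_Ioi (by norm_num : (0:ℝ) ≤ 2),
    setIntegral_union (Ioc_disjoint_Ioi le_rfl) measurableSet_Ioi hg ?_]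
  · rw [setIntegral_congr_fun measurableSet_Ioi h0]
    simp
  · exact IntegrableOn.congr_fun (integrableOn_zero) (fun y hy => (h0 y hy).symm) measurableSet_Ioi

lemma sq_rpow_half (x : ℝ) (hx : 0 ≤ x) : (x ^ ((1:ℝ)/2))^2 = x := by
  rw [← Real.rpow_natCast (x ^ ((1:ℝ)/2)) 2, ← Real.rpow_mul hx]
  norm_num

lemma g_nonneg (N n : ℕ) (k : ℕ) (y : ℝ) (hy : 0 < y) : 0 ≤ y^k * (bubbleProfile N n y)^2 := by
  positivity

lemma integrableOn_g (N n : ℕ) (hN : 2 ≤ N) (k : ℕ) (M : ℝ)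
    (hM : ∀ y ∈ Ioc (0:ℝ) 2, y^k * (bubbleProfile N n y)^2 ≤ M) :
    IntegrableOn (fun y => y^k * (bubbleProfile N n y)^2) (Ioc (0:ℝ) 2) := by
  apply Measure.integrableOn_of_bounded (M := M) (by simp)
  · exact ((measurable_id.pow_const k : Measurable fun y : ℝ => y^k).mul
      ((measurable_bubbleProfile N n hN).pow_const 2)).aestronglyMeasurable
  · rw [ae_restrict_iff' measurableSet_Ioc]
    filter_upwards with y hy
    rw [Real.norm_eq_abs, abs_of_nonneg (g_nonneg N n k y hy.1)]
    exact hM y hy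

/-! ### The case N = 3 -/

lemma prof3_sq (n : ℕ) (r : ℝ) :
    (bubbleProfile 3 n r)^2 =
      if r < 1 then Real.sqrt 3 * ((n:ℝ) / (1 + (n:ℝ)^2 * r^2))
      else if r < 2 then Real.sqrt 3 * ((n:ℝ) / (1 + (n:ℝ)^2)) * (2 - r)^2
      else 0 := by
  have hA : (((3:ℕ):ℝ) * (((3:ℕ):ℝ) - 2)) ^ ((((3:ℕ):ℝ) - 2) / 4) = (3:ℝ) ^ ((1:ℝ)/4) := by
    norm_num
  have hA2 : ((3:ℝ) ^ ((1:ℝ)/4))^2 = Real.sqrt 3 := by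
    rw [← Real.rpow_natCast ((3:ℝ) ^ ((1:ℝ)/4)) 2, ← Real.rpow_mul (by norm_num)]
    rw [Real.sqrt_eq_rpow]; norm_num
  have he : (((3:ℕ):ℝ) - 2) / 2 = (1:ℝ)/2 := by norm_num
  unfold bubbleProfile
  split_ifs with h1 h2
  · rw [hA, he, mul_pow, hA2, sq_rpow_half _ (by positivity)]
  · rw [hA, he, mul_pow, mul_pow, hA2, sq_rpow_half _ (by positivity)]
  · ring

lemma bound3 (n : ℕ) (hn : 1 ≤ n) (y : ℝ) (hy : y ∈ Ioc (0:ℝ) 2) :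
    y^2 * (bubbleProfile 3 n y)^2 ≤ 4 * Real.sqrt 3 / n := by
  have hn' : (0:ℝ) < n := by exact_mod_cast hn
  have hn1 : (1:ℝ) ≤ n := by exact_mod_cast hn
  have hd := denom_pos n y
  have hs := Real.sqrt_nonneg 3
  rw [prof3_sq]
  split_ifs with h1 h2
  · have key : y^2 * ((n:ℝ)/(1+(n:ℝ)^2*y^2)) ≤ 1/n := by
      rw [mul_div_assoc', div_le_div_iff₀ hd hn']
      nlinarith
    calc y^2 * (Real.sqrt 3 * ((n:ℝ)/(1+(n:ℝ)^2*y^2)))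
        = Real.sqrt 3 * (y^2 * ((n:ℝ)/(1+(n:ℝ)^2*y^2))) := by ring
      _ ≤ Real.sqrt 3 * (1/n) := mul_le_mul_of_nonneg_left key hs
      _ ≤ 4 * Real.sqrt 3 / n := by
          rw [mul_one_div, div_le_div_iff₀ hn' hn']; nlinarith
  · have hdn : (0:ℝ) < 1 + (n:ℝ)^2 := by positivity
    have h1' : (1:ℝ) ≤ y := not_lt.mp h1
    have key : (n:ℝ)/(1+(n:ℝ)^2) ≤ 1/n := by
      rw [div_le_div_iff₀ hdn hn']; nlinarith
    calc y^2 * (Real.sqrt 3 * ((n:ℝ)/(1+(n:ℝ)^2)) * (2-y)^2)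
        ≤ 2^2 * (Real.sqrt 3 * (1/n) * 1^2) := by
          gcongr <;> nlinarith [key]
      _ = 4 * Real.sqrt 3 / n := by ring
  · simp only [mul_zero]; positivity

lemma radial3 (n : ℕ) (hn : 1 ≤ n) :
    ∫ y in Ioi (0:ℝ), y^2 * (bubbleProfile 3 n y)^2 ≤ 8 * Real.sqrt 3 / n := by
  have hInt := integrableOn_g 3 n (by norm_num) 2 _ (bound3 n hn)
  rw [integral_Ioi_eq_Ioc _ hInt (fun y hy => by
    rw [bubbleProfile_eq_zero 3 n y (le_of_lt hy)]; ring)]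
  calc ∫ y in Ioc (0:ℝ) 2, y^2 * (bubbleProfile 3 n y)^2
      ≤ ∫ _y in Ioc (0:ℝ) 2, 4 * Real.sqrt 3 / n :=
        setIntegral_mono_on hInt (integrableOn_const (by simp)) measurableSet_Ioc
          (bound3 n hn)
    _ = 8 * Real.sqrt 3 / n := by
        rw [setIntegral_const]
        simp [Real.volume_Ioc]
        ring

lemma case3 (n : ℕ) (hn : 1 ≤ n) :
    (∫ x : EuclideanSpace ℝ (Fin 3), (Ubub 3 n x) ^ 2)
      ≤ 24 * (volume (Metric.ball (0:EuclideanSpace ℝ (Fin 3)) 1)).toReal * Real.sqrt 3 / n := by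
  set V := (volume (Metric.ball (0:EuclideanSpace ℝ (Fin 3)) 1)).toReal with hV
  have h := integral_fun_norm_addHaar (volume : Measure (EuclideanSpace ℝ (Fin 3)))
    (fun r => (bubbleProfile 3 n r)^2)
  simp only [finrank_euclideanSpace_fin] at h
  have heq : (∫ x : EuclideanSpace ℝ (Fin 3), (Ubub 3 n x) ^ 2)
      = 3 * V * ∫ y in Ioi (0:ℝ), y^2 * (bubbleProfile 3 n y)^2 := by
    simp only [Ubub]
    rw [h]
    simp [smul_eq_mul, mul_assoc]
    exact Or.inl rfl
  rw [heq]
  have hVn : 0 ≤ V := ENNReal.toReal_nonneg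
  calc 3 * V * ∫ y in Ioi (0:ℝ), y^2 * (bubbleProfile 3 n y)^2
      ≤ 3 * V * (8 * Real.sqrt 3 / n) := by
        apply mul_le_mul_of_nonneg_left (radial3 n hn) (by positivity)
    _ = 24 * V * Real.sqrt 3 / n := by ring

/-! ### The case N = 4 -/

lemma prof4_sq (n : ℕ) (r : ℝ) :
    (bubbleProfile 4 n r)^2 =
      if r < 1 then 8 * ((n:ℝ) / (1 + (n:ℝ)^2 * r^2))^2
      else if r < 2 then 8 * ((n:ℝ) / (1 + (n:ℝ)^2))^2 * (2 - r)^2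
      else 0 := by
  have hA : (((4:ℕ):ℝ) * (((4:ℕ):ℝ) - 2)) ^ ((((4:ℕ):ℝ) - 2) / 4) = (8:ℝ) ^ ((1:ℝ)/2) := by
    norm_num
  have hA2 : ((8:ℝ) ^ ((1:ℝ)/2))^2 = 8 := sq_rpow_half 8 (by norm_num)
  have he : (((4:ℕ):ℝ) - 2) / 2 = (1:ℝ) := by norm_num
  unfold bubbleProfile
  split_ifs with h1 h2
  · rw [hA, he, mul_pow, hA2, Real.rpow_one]
  · rw [hA, he, mul_pow, mul_pow, hA2, Real.rpow_one]
  · ring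

lemma bound4a (n : ℕ) (hn : 1 ≤ n) (y : ℝ) (hy : y ∈ Ioc (0:ℝ) 1) :
    y^3 * (bubbleProfile 4 n y)^2 ≤ 8 * (y / (1 + (n:ℝ)^2 * y^2)) := by
  have hn' : (0:ℝ) < n := by exact_mod_cast hn
  have hd := denom_pos n y
  have hy0 := hy.1
  rw [prof4_sq]
  split_ifs with h1 h2
  · have key : y^3 * ((n:ℝ) / (1 + (n:ℝ)^2 * y^2))^2 ≤ y / (1 + (n:ℝ)^2 * y^2) := by
      rw [div_pow, mul_div_assoc', div_le_div_iff₀ (by positivity) hd]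
      nlinarith [mul_nonneg (mul_nonneg hy0.le hd.le) (sq_nonneg ((n:ℝ)*y)),
        mul_pos hy0 hd]
    calc y^3 * (8 * ((n:ℝ) / (1 + (n:ℝ)^2 * y^2))^2)
        = 8 * (y^3 * ((n:ℝ) / (1 + (n:ℝ)^2 * y^2))^2) := by ring
      _ ≤ 8 * (y / (1 + (n:ℝ)^2 * y^2)) := by linarith
  · have hy1 : y = 1 := le_antisymm hy.2 (not_lt.mp h1)
    subst hy1
    have hdn : (0:ℝ) < 1 + (n:ℝ)^2 := by positivity
    have key : ((n:ℝ) / (1 + (n:ℝ)^2))^2 ≤ 1 / (1 + (n:ℝ)^2) := by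
      rw [div_pow, div_le_div_iff₀ (by positivity) hdn]
      nlinarith
    calc (1:ℝ)^3 * (8 * ((n:ℝ) / (1 + (n:ℝ)^2))^2 * (2-1)^2)
        = 8 * ((n:ℝ) / (1 + (n:ℝ)^2))^2 := by ring
      _ ≤ 8 * (1 / (1 + (n:ℝ)^2)) := by linarith
      _ = 8 * (1 / (1 + (n:ℝ)^2 * 1^2)) := by norm_num
  · exfalso; exact h2 (by linarith [hy.2])

lemma bound4b (n : ℕ) (hn : 1 ≤ n) (y : ℝ) (hy : y ∈ Ioc (1:ℝ) 2) :
    y^3 * (bubbleProfile 4 n y)^2 ≤ 64 / (n:ℝ)^2 := by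
  have hn' : (0:ℝ) < n := by exact_mod_cast hn
  have hy1 := hy.1
  rw [prof4_sq]
  split_ifs with h1 h2
  · exfalso; linarith
  · have hdn : (0:ℝ) < 1 + (n:ℝ)^2 := by positivity
    have key : ((n:ℝ) / (1 + (n:ℝ)^2))^2 ≤ 1 / (n:ℝ)^2 := by
      rw [div_pow, div_le_div_iff₀ (by positivity) (by positivity)]
      nlinarith
    calc y^3 * (8 * ((n:ℝ) / (1 + (n:ℝ)^2))^2 * (2-y)^2)
        ≤ 2^3 * (8 * (1/(n:ℝ)^2) * 1^2) := by
          gcongr <;> nlinarith [key]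
      _ = 64 / (n:ℝ)^2 := by ring
  · simp only [mul_zero]; positivity

lemma bound4c (n : ℕ) (hn : 1 ≤ n) (y : ℝ) (hy : y ∈ Ioc (0:ℝ) 2) :
    y^3 * (bubbleProfile 4 n y)^2 ≤ 64 := by
  have hn1 : (1:ℝ) ≤ n := by exact_mod_cast hn
  rcases le_or_gt y 1 with h | h
  · refine (bound4a n hn y ⟨hy.1, h⟩).trans ?_
    have hd := denom_pos n y
    have : y / (1 + (n:ℝ)^2 * y^2) ≤ y := by
      apply div_le_self hy.1.le
      nlinarith
    nlinarith
  · refine (bound4b n hn y ⟨h, hy.2⟩).trans ?_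
    rw [div_le_iff₀ (by positivity)]
    nlinarith

lemma int_log (n : ℕ) (hn : 1 ≤ n) :
    ∫ y in Ioc (0:ℝ) 1, y / (1 + (n:ℝ)^2 * y^2)
      = Real.log (1 + (n:ℝ)^2) / (2 * (n:ℝ)^2) := by
  have hn' : (0:ℝ) < n := by exact_mod_cast hn
  have hF : ∀ x ∈ uIcc (0:ℝ) 1,
      HasDerivAt (fun y => Real.log (1 + (n:ℝ)^2 * y^2) / (2 * (n:ℝ)^2))
        (x / (1 + (n:ℝ)^2 * x^2)) x := by
    intro x _
    have h1 : HasDerivAt (fun y : ℝ => 1 + (n:ℝ)^2 * y^2) (2 * (n:ℝ)^2 * x) x := by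
      have := ((hasDerivAt_pow 2 x).const_mul ((n:ℝ)^2)).const_add 1
      refine this.congr_deriv ?_
      rw [Nat.cast_ofNat, show (2:ℕ)-1 = 1 from rfl, pow_one]
      ring
    have h2 := (Real.hasDerivAt_log (denom_pos n x).ne').comp x h1
    have h3 := h2.div_const (2 * (n:ℝ)^2)
    refine h3.congr_deriv ?_
    field_simp [(denom_pos n x).ne']
  have hc : Continuous fun y : ℝ => y / (1 + (n:ℝ)^2 * y^2) :=
    continuous_id.div (by continuity) (fun y => (denom_pos n y).ne')
  rw [← intervalIntegral.integral_of_le zero_le_one,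
    intervalIntegral.integral_eq_sub_of_hasDerivAt hF (hc.intervalIntegrable 0 1)]
  simp [Real.log_one]

lemma radial4 (n : ℕ) (hn : 1 ≤ n) :
    ∫ y in Ioi (0:ℝ), y^3 * (bubbleProfile 4 n y)^2
      ≤ (4 + 64 / Real.log 2) * Real.log (1 + (n:ℝ)^2) / (n:ℝ)^2 := by
  have hn' : (0:ℝ) < n := by exact_mod_cast hn
  have hn1 : (1:ℝ) ≤ n := by exact_mod_cast hn
  have hlog2 : (0:ℝ) < Real.log 2 := Real.log_pos one_lt_two
  have hL2 : Real.log 2 ≤ Real.log (1 + (n:ℝ)^2) := by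
    apply Real.log_le_log (by norm_num)
    nlinarith [sq_nonneg ((n:ℝ) - 1)]
  have hL0 : (0:ℝ) ≤ Real.log (1 + (n:ℝ)^2) := hlog2.le.trans hL2
  have hInt := integrableOn_g 4 n (by norm_num) 3 64 (bound4c n hn)
  have hsub1 : Ioc (0:ℝ) 1 ⊆ Ioc (0:ℝ) 2 := Ioc_subset_Ioc le_rfl one_le_two
  have hsub2 : Ioc (1:ℝ) 2 ⊆ Ioc (0:ℝ) 2 := Ioc_subset_Ioc zero_le_one le_rfl
  have hc : Continuous fun y : ℝ => 8 * (y / (1 + (n:ℝ)^2 * y^2)) :=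
    continuous_const.mul (continuous_id.div (by continuity) (fun y => (denom_pos n y).ne'))
  rw [integral_Ioi_eq_Ioc _ hInt (fun y hy => by
    rw [bubbleProfile_eq_zero 4 n y (le_of_lt hy)]; ring)]
  rw [← Ioc_union_Ioc_eq_Ioc (zero_le_one) (one_le_two : (1:ℝ) ≤ 2),
    setIntegral_union (Ioc_disjoint_Ioc_of_le le_rfl) measurableSet_Ioc
      (hInt.mono_set hsub1) (hInt.mono_set hsub2)]
  have hp1 : ∫ y in Ioc (0:ℝ) 1, y^3 * (bubbleProfile 4 n y)^2
      ≤ 4 * Real.log (1 + (n:ℝ)^2) / (n:ℝ)^2 := by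
    calc ∫ y in Ioc (0:ℝ) 1, y^3 * (bubbleProfile 4 n y)^2
        ≤ ∫ y in Ioc (0:ℝ) 1, 8 * (y / (1 + (n:ℝ)^2 * y^2)) :=
          setIntegral_mono_on (hInt.mono_set hsub1) (hc.integrableOn_Ioc)
            measurableSet_Ioc (bound4a n hn)
      _ = 8 * ∫ y in Ioc (0:ℝ) 1, y / (1 + (n:ℝ)^2 * y^2) := integral_const_mul 8 _
      _ = 4 * Real.log (1 + (n:ℝ)^2) / (n:ℝ)^2 := by
          rw [int_log n hn]; field_simp; ring
  have hp2 : ∫ y in Ioc (1:ℝ) 2, y^3 * (bubbleProfile 4 n y)^2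
      ≤ (64 / Real.log 2) * Real.log (1 + (n:ℝ)^2) / (n:ℝ)^2 := by
    calc ∫ y in Ioc (1:ℝ) 2, y^3 * (bubbleProfile 4 n y)^2
        ≤ ∫ _y in Ioc (1:ℝ) 2, 64 / (n:ℝ)^2 :=
          setIntegral_mono_on (hInt.mono_set hsub2)
            (integrableOn_const (by simp)) measurableSet_Ioc (bound4b n hn)
      _ = 64 / (n:ℝ)^2 := by
          rw [setIntegral_const]
          simp [Real.volume_Ioc]
          norm_num
      _ ≤ (64 / Real.log 2) * Real.log (1 + (n:ℝ)^2) / (n:ℝ)^2 := by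
          have h64 : (64:ℝ) ≤ 64 / Real.log 2 * Real.log (1 + (n:ℝ)^2) := by
            rw [div_mul_eq_mul_div, le_div_iff₀ hlog2]; nlinarith
          exact (div_le_div_iff_of_pos_right (by positivity)).mpr h64
  have hsplit : (4 + 64 / Real.log 2) * Real.log (1 + (n:ℝ)^2) / (n:ℝ)^2
      = 4 * Real.log (1 + (n:ℝ)^2) / (n:ℝ)^2
        + (64 / Real.log 2) * Real.log (1 + (n:ℝ)^2) / (n:ℝ)^2 := by ring
  linarith

lemma case4 (n : ℕ) (hn : 1 ≤ n) :
    (∫ x : EuclideanSpace ℝ (Fin 4), (Ubub 4 n x) ^ 2)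
      ≤ 4 * (volume (Metric.ball (0:EuclideanSpace ℝ (Fin 4)) 1)).toReal
          * (4 + 64 / Real.log 2) * Real.log (1 + (n:ℝ)^2) / (n:ℝ)^2 := by
  set V := (volume (Metric.ball (0:EuclideanSpace ℝ (Fin 4)) 1)).toReal with hV
  have h := integral_fun_norm_addHaar (volume : Measure (EuclideanSpace ℝ (Fin 4)))
    (fun r => (bubbleProfile 4 n r)^2)
  simp only [finrank_euclideanSpace_fin] at h
  have heq : (∫ x : EuclideanSpace ℝ (Fin 4), (Ubub 4 n x) ^ 2)
      = 4 * V * ∫ y in Ioi (0:ℝ), y^3 * (bubbleProfile 4 n y)^2 := by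
    simp only [Ubub]
    rw [h]
    simp [smul_eq_mul, mul_assoc]
    exact Or.inl rfl
  rw [heq]
  have hVn : 0 ≤ V := ENNReal.toReal_nonneg
  calc 4 * V * ∫ y in Ioi (0:ℝ), y^3 * (bubbleProfile 4 n y)^2
      ≤ 4 * V * ((4 + 64 / Real.log 2) * Real.log (1 + (n:ℝ)^2) / (n:ℝ)^2) := by
        apply mul_le_mul_of_nonneg_left (radial4 n hn) (by positivity)
    _ = 4 * V * (4 + 64 / Real.log 2) * Real.log (1 + (n:ℝ)^2) / (n:ℝ)^2 := by ring

end StmtSeven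

theorem stmt_7 (N : ℕ) (hN : N = 3 ∨ N = 4) :
    (N = 3 → ∃ C : ℝ, 0 < C ∧ ∀ n : ℕ, 1 ≤ n →
      (∫ x : EuclideanSpace ℝ (Fin N), (Ubub N n x) ^ 2) ≤ C / (n : ℝ)) ∧
    (N = 4 → ∃ C : ℝ, 0 < C ∧ ∀ n : ℕ, 1 ≤ n →
      (∫ x : EuclideanSpace ℝ (Fin N), (Ubub N n x) ^ 2)
        ≤ C * Real.log (1 + (n : ℝ) ^ 2) / (n : ℝ) ^ 2) := by
  constructor
  · intro h3
    subst h3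
    set V := (volume (Metric.ball (0:EuclideanSpace ℝ (Fin 3)) 1)).toReal with hV
    have hVpos : 0 < V :=
      ENNReal.toReal_pos (Metric.measure_ball_pos volume _ one_pos).ne' measure_ball_lt_top.ne
    refine ⟨24 * V * Real.sqrt 3, by positivity, fun n hn => ?_⟩
    exact (StmtSeven.case3 n hn).trans (le_of_eq (by ring))
  · intro h4
    subst h4
    set V := (volume (Metric.ball (0:EuclideanSpace ℝ (Fin 4)) 1)).toReal with hV
    have hVpos : 0 < V :=
      ENNReal.toReal_pos (Metric.measure_ball_pos volume _ one_pos).ne' measure_ball_lt_top.ne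
    have hlog2 : (0:ℝ) < Real.log 2 := Real.log_pos one_lt_two
    refine ⟨4 * V * (4 + 64 / Real.log 2), by positivity, fun n hn => ?_⟩
    exact (StmtSeven.case4 n hn).trans (le_of_eq (by ring))
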